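/- Let V = V₀ ⊕ V₁ be a ℤ/2-graded ℚ-vector space with a bilinear pairing ⟨−,−⟩ : V × V → ℚ. Call a linear operator F : V → V pure of parity |F| ∈ {0,1} if F(V_ε) ⊆ V_{ε+|F|} for both ε, and call a pure operator F (+)-self-adjoint (resp. (−)-self-adjoint) if ⟨F(x), y⟩ = (−1)^{|F|·|x|}⟨x, F(y)⟩ (resp. ⟨F(x), y⟩ = −(−1)^{|F|·|x|}⟨x, F(y)⟩) for all homogeneous x, y ∈ V. Suppose 𝟙 ∈ V₀ and {G_s}_{s ∈ S} is a family of pure (+)-self-adjoint operators such that V is spanned by the vectors G_{s₁}∘⋯∘G_{s_n}(𝟙) over all n ≥ 0 and s₁,…,s_n ∈ S. Then a pure operator F is (±)-self-adjoint if and only if: (i) ⟨F(𝟙), D⟩ = ±⟨𝟙, F(D)⟩ for all D ∈ V; and (ii) for every s ∈ S the super-commutator [F, G_s] = F∘G_s − (−1)^{|F|·|G_s|} G_s∘F is (∓)-self-adjoint. -/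

import Mathlib

/-!
Statement 10 (Lemma 5.5 of the paper): a criterion for (±)-self-adjointness of a pure operator
on a `ℤ/2`-graded vector space with a bilinear pairing, in terms of its value on a cyclic even
vector and its super-commutators with a spanning family of self-adjoint operators.

A `ℤ/2`-grading is encoded by a pair of complementary submodules `V0, V1`; parities are elements
of `ZMod 2`, the sign `(−1)^ε` is `parSign ε`, and homogeneity is quantified via `gradePiece`.
-/

noncomputable section

variable {V : Type*} [AddCommGroup V] [Module ℚ V]

/-- The two graded pieces of the grading determined by `V0, V1`. -/
def gradePiece (V0 V1 : Submodule ℚ V) : ZMod 2 → Submodule ℚ V :=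
  fun ε => if ε = 0 then V0 else V1

/-- The sign `(−1)^ε` of a parity `ε ∈ ℤ/2`. -/
def parSign (ε : ZMod 2) : ℚ := if ε = 0 then 1 else -1

/-- An operator `F` is pure of parity `p` if `F(V_ε) ⊆ V_{ε+p}` for both `ε`. -/
def IsPureOp (V0 V1 : Submodule ℚ V) (F : V →ₗ[ℚ] V) (p : ZMod 2) : Prop :=
  ∀ ε : ZMod 2, ∀ x ∈ gradePiece V0 V1 ε, F x ∈ gradePiece V0 V1 (ε + p)

/-- A pure operator `F` of parity `p` is `s`-self-adjoint (for a sign `s = ±1`) with respect to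
the pairing `B` if `⟨F x, y⟩ = s (−1)^{|F||x|} ⟨x, F y⟩` for all homogeneous `x, y`. -/
def IsSignedSelfAdjoint (V0 V1 : Submodule ℚ V) (B : V →ₗ[ℚ] V →ₗ[ℚ] ℚ) (s : ℚ)
    (F : V →ₗ[ℚ] V) (p : ZMod 2) : Prop :=
  ∀ εx : ZMod 2, ∀ x ∈ gradePiece V0 V1 εx, ∀ εy : ZMod 2, ∀ y ∈ gradePiece V0 V1 εy,
    B (F x) y = s * parSign (p * εx) * B x (F y)

/-- The super-commutator `[F, G] = F ∘ G − (−1)^{|F||G|} G ∘ F` of pure operators of parities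
`pF`, `pG`. -/
def superComm (F : V →ₗ[ℚ] V) (pF : ZMod 2) (G : V →ₗ[ℚ] V) (pG : ZMod 2) : V →ₗ[ℚ] V :=
  F ∘ₗ G - parSign (pF * pG) • (G ∘ₗ F)

lemma gradePiece_zero' (V0 V1 : Submodule ℚ V) : gradePiece V0 V1 0 = V0 := if_pos rfl

lemma gradePiece_one' (V0 V1 : Submodule ℚ V) : gradePiece V0 V1 1 = V1 := if_neg (by decide)

lemma parity_cases : ∀ z : ZMod 2, z = 0 ∨ z = 1 := by decide

lemma signId (s A C : ℚ) (a b e : ZMod 2) :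
    -s * parSign ((a + b) * e) * (A - parSign (a * b) * C)
      + parSign (a * b) * (parSign (b * (e + a)) * (s * (parSign (a * e) * A)))
      = s * (parSign (a * (e + b)) * (parSign (b * e) * C)) := by
  rcases parity_cases a with rfl | rfl <;> rcases parity_cases b with rfl | rfl <;>
    rcases parity_cases e with rfl | rfl <;>
    simp [parSign, show (1 + 1 : ZMod 2) = 0 by decide, show (1 : ZMod 2) ≠ 0 by decide] <;>
    ring

/-- Lemma 5.5 of the paper: let `𝟙 ∈ V₀` and let `{G_s}_{s ∈ S}` be a family
of pure `(+)`-self-adjoint operators such that `V` is spanned by the iterates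
`G_{s₁} ∘ ⋯ ∘ G_{s_n} (𝟙)`.  Then a pure operator `F` is `(±)`-self-adjoint if and only if
(i) `⟨F 𝟙, D⟩ = ±⟨𝟙, F D⟩` for all `D ∈ V`, and (ii) every super-commutator `[F, G_s]` is
`(∓)`-self-adjoint. -/
theorem stmt10 (V0 V1 : Submodule ℚ V) (hgrading : IsCompl V0 V1)
    (B : V →ₗ[ℚ] V →ₗ[ℚ] ℚ)
    (one : V) (hone : one ∈ V0)
    (S : Type*) (G : S → (V →ₗ[ℚ] V)) (pG : S → ZMod 2)
    (hGpure : ∀ s : S, IsPureOp V0 V1 (G s) (pG s))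
    (hGsa : ∀ s : S, IsSignedSelfAdjoint V0 V1 B 1 (G s) (pG s))
    (hspan : ⊤ ≤ Submodule.span ℚ
      {x : V | ∃ ls : List S, x = ((ls.map G).foldr (· ∘ₗ ·) LinearMap.id) one})
    (F : V →ₗ[ℚ] V) (pF : ZMod 2) (hFpure : IsPureOp V0 V1 F pF)
    (s : ℚ) (hs : s = 1 ∨ s = -1) :
    IsSignedSelfAdjoint V0 V1 B s F pF ↔
      ((∀ D : V, B (F one) D = s * B one (F D)) ∧
        ∀ t : S, IsSignedSelfAdjoint V0 V1 B (-s) (superComm F pF (G t) (pG t)) (pF + pG t)) := by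
  have honeP : one ∈ gradePiece V0 V1 0 := by rw [gradePiece_zero']; exact hone
  -- decomposition into homogeneous pieces
  have hdecomp : ∀ y : V, ∃ y0 y1 : V,
      y0 ∈ gradePiece V0 V1 0 ∧ y1 ∈ gradePiece V0 V1 1 ∧ y = y0 + y1 := by
    intro y
    have hy : y ∈ V0 ⊔ V1 := by rw [hgrading.sup_eq_top]; trivial
    rw [Submodule.mem_sup] at hy
    obtain ⟨y0, h0, y1, h1, hsum⟩ := hy
    exact ⟨y0, y1, by rw [gradePiece_zero']; exact h0, by rw [gradePiece_one']; exact h1,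
      hsum.symm⟩
  -- the sign-twist operator `K`
  have hKex : ∃ K : V →ₗ[ℚ] V, ∀ ε : ZMod 2, ∀ x ∈ gradePiece V0 V1 ε,
      K x = parSign (pF * ε) • x := by
    rcases parity_cases pF with hpF | hpF
    · refine ⟨LinearMap.id, ?_⟩
      intro ε x _
      simp [hpF, parSign]
    · refine ⟨(2 : ℚ) • (V0.subtype ∘ₗ Submodule.projectionOnto V0 V1 hgrading)
        - LinearMap.id, ?_⟩
      intro ε x hx
      rcases parity_cases ε with rfl | rfl
      · rw [gradePiece_zero'] at hx
        have h := Submodule.projectionOnto_apply_of_mem_left hgrading hx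
        simp only [hpF, mul_zero, parSign, if_pos rfl, one_smul, LinearMap.sub_apply,
          LinearMap.smul_apply, LinearMap.comp_apply, LinearMap.id_apply]
        rw [h]
        simp [two_smul]
      · rw [gradePiece_one'] at hx
        have h := Submodule.projectionOnto_apply_of_mem_right hgrading hx
        simp only [hpF, mul_one, parSign, if_neg (show (1 : ZMod 2) ≠ 0 by decide),
          LinearMap.sub_apply, LinearMap.smul_apply, LinearMap.comp_apply, LinearMap.id_apply, h]
        simp
  obtain ⟨K, hK⟩ := hKex
  constructor
  · -- forward direction
    intro hF
    constructor
    · intro D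
      obtain ⟨D0, D1, h0, h1, rfl⟩ := hdecomp D
      have e0 := hF 0 one honeP 0 D0 h0
      have e1 := hF 0 one honeP 1 D1 h1
      have hσ : parSign (pF * 0) = 1 := by rw [mul_zero]; simp [parSign]
      rw [hσ, mul_one] at e0 e1
      simp only [map_add, LinearMap.add_apply]
      rw [e0, e1]; ring
    · intro t εx x hx εy y hy
      have hGtx := hGpure t εx x hx
      have hFx := hFpure εx x hx
      have hFy := hFpure εy y hy
      have hGty := hGpure t εy y hy
      have Ec : B ((superComm F pF (G t) (pG t)) x) y
          = B (F (G t x)) y - parSign (pF * pG t) * B (G t (F x)) y := by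
        simp [superComm, LinearMap.sub_apply, LinearMap.smul_apply, LinearMap.comp_apply,
          map_sub, map_smul, smul_eq_mul]
      have Ey : B x ((superComm F pF (G t) (pG t)) y)
          = B x (F (G t y)) - parSign (pF * pG t) * B x (G t (F y)) := by
        simp [superComm, LinearMap.sub_apply, LinearMap.smul_apply, LinearMap.comp_apply,
          map_sub, map_smul, smul_eq_mul]
      have F1 := hF (εx + pG t) (G t x) hGtx εy y hy
      have F2 := hGsa t εx x hx (εy + pF) (F y) hFy
      have F3 := hGsa t (εx + pF) (F x) hFx εy y hy
      have F4 := hF εx x hx (εy + pG t) (G t y) hGty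
      linear_combination Ec + F1 + (s * parSign (pF * (εx + pG t))) * F2
        - parSign (pF * pG t) * F3
        - (parSign (pF * pG t) * parSign (pG t * (εx + pF))) * F4
        + (s * parSign ((pF + pG t) * εx)) * Ey
        - signId s (B x (F (G t y))) (B x (G t (F y))) pF (pG t) εx
  · -- backward direction
    rintro ⟨hOne, hComm⟩
    -- the main claim for iterated vectors, with homogeneity
    have hlist : ∀ ls : List S,
        (((ls.map G).foldr (· ∘ₗ ·) LinearMap.id) one ∈ gradePiece V0 V1 ((ls.map pG).sum)) ∧
        ∀ y, B (F (((ls.map G).foldr (· ∘ₗ ·) LinearMap.id) one)) y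
          = s * B (K (((ls.map G).foldr (· ∘ₗ ·) LinearMap.id) one)) (F y) := by
      intro ls
      induction ls with
      | nil =>
        simp only [List.map_nil, List.foldr_nil, List.sum_nil, LinearMap.id_coe, id_eq]
        refine ⟨honeP, ?_⟩
        intro y
        have hKone : K one = one := by
          rw [hK 0 one honeP, mul_zero]
          simp [parSign]
        rw [hKone]
        exact hOne y
      | cons t ls ih =>
        obtain ⟨hw, ihQ⟩ := ih
        simp only [List.map_cons, List.foldr_cons, List.sum_cons, LinearMap.comp_apply]
        set w : V := ((ls.map G).foldr (· ∘ₗ ·) LinearMap.id) one with hwdef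
        set e : ZMod 2 := (ls.map pG).sum with hedef
        have hGtw : G t w ∈ gradePiece V0 V1 (e + pG t) := hGpure t e w hw
        refine ⟨by rwa [add_comm], ?_⟩
        have hom : ∀ εy : ZMod 2, ∀ y ∈ gradePiece V0 V1 εy,
            B (F (G t w)) y = s * B (K (G t w)) (F y) := by
          intro εy y hy
          have hFw : F w ∈ gradePiece V0 V1 (e + pF) := hFpure e w hw
          have hFy : F y ∈ gradePiece V0 V1 (εy + pF) := hFpure εy y hy
          have hGty := hGpure t εy y hy
          have Ec : B ((superComm F pF (G t) (pG t)) w) y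
              = B (F (G t w)) y - parSign (pF * pG t) * B (G t (F w)) y := by
            simp [superComm, LinearMap.sub_apply, LinearMap.smul_apply, LinearMap.comp_apply,
              map_sub, map_smul, smul_eq_mul]
          have E2 := hComm t e w hw εy y hy
          have E3 : B w ((superComm F pF (G t) (pG t)) y)
              = B w (F (G t y)) - parSign (pF * pG t) * B w (G t (F y)) := by
            simp [superComm, LinearMap.sub_apply, LinearMap.smul_apply, LinearMap.comp_apply,
              map_sub, map_smul, smul_eq_mul]
          have E4 := hGsa t (e + pF) (F w) hFw εy y hy
          have E5 := ihQ (G t y)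
          have EK : B (K w) (F (G t y)) = parSign (pF * e) * B w (F (G t y)) := by
            rw [hK e w hw, map_smul, LinearMap.smul_apply, smul_eq_mul]
          have E6 : B (K (G t w)) (F y) = parSign (pF * (e + pG t)) * B (G t w) (F y) := by
            rw [hK (e + pG t) (G t w) hGtw, map_smul, LinearMap.smul_apply, smul_eq_mul]
          have E7 := hGsa t e w hw (εy + pF) (F y) hFy
          linear_combination (-1 : ℚ) * Ec + E2
            + (-(s * parSign ((pF + pG t) * e))) * E3
            + parSign (pF * pG t) * E4
            + (parSign (pF * pG t) * parSign (pG t * (e + pF))) * E5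
            + (parSign (pF * pG t) * parSign (pG t * (e + pF)) * s) * EK
            + (-s) * E6
            + (-(s * parSign (pF * (e + pG t)))) * E7
            + signId s (B w (F (G t y))) (B w (G t (F y))) pF (pG t) e
        intro y
        obtain ⟨y0, y1, h0, h1, rfl⟩ := hdecomp y
        have q0 := hom 0 y0 h0
        have q1 := hom 1 y1 h1
        simp only [map_add, LinearMap.add_apply]
        rw [q0, q1]; ring
    -- extend to all of `V` by linearity
    have hQ : ∀ x : V, ∀ y, B (F x) y = s * B (K x) (F y) := by
      intro x
      have hx : x ∈ Submodule.span ℚ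
          {x : V | ∃ ls : List S, x = ((ls.map G).foldr (· ∘ₗ ·) LinearMap.id) one} :=
        hspan Submodule.mem_top
      induction hx using Submodule.span_induction with
      | mem x hx =>
        obtain ⟨ls, rfl⟩ := hx
        exact (hlist ls).2
      | zero => intro y; simp
      | add u v hu hv ihu ihv =>
        intro y
        simp only [map_add, LinearMap.add_apply]
        rw [ihu y, ihv y]; ring
      | smul c u hu ihu =>
        intro y
        simp only [map_smul, LinearMap.smul_apply, smul_eq_mul]
        rw [ihu y]; ring
    intro εx x hx εy y hy
    rw [hQ x y, hK εx x hx, map_smul, LinearMap.smul_apply, smul_eq_mul]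
    ring

end
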